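/- Let R be a UFD and S a multiplicative subset of R generated by prime elements. If H ∈ R is irreducible and not associated to any prime generating S, and A ∈ S, then H/A is an irreducible element of S⁻¹R. -/

import Mathlib

theorem stmt_8 {R : Type*} [CommRing R] [IsDomain R] [UniqueFactorizationMonoid R]
    (P : Set R) (hP : ∀ p ∈ P, Prime p)
    (H : R) (hH : Irreducible H) (hass : ∀ p ∈ P, ¬ Associated H p)
    (A : R) (hA : A ∈ Submonoid.closure P) :
    Irreducible (Localization.mk H (⟨A, hA⟩ : Submonoid.closure P)) := by
  set S := Submonoid.closure P with hSdef
  set L := Localization S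
  have hHp : Prime H := hH.prime
  -- elements of S are nonzero
  have hSne : ∀ s ∈ S, s ≠ 0 := by
    intro s hs
    refine Submonoid.closure_induction (fun p hp => (hP p hp).ne_zero) one_ne_zero ?_ hs
    intro a b _ _ ha hb
    exact mul_ne_zero ha hb
  have hle : S ≤ nonZeroDivisors R := fun s hs => mem_nonZeroDivisors_of_ne_zero (hSne s hs)
  have : IsDomain L := IsLocalization.isDomain_localization hle
  -- H does not divide any element of S
  have hnd : ∀ s ∈ S, ¬ H ∣ s := by
    intro s hs
    refine Submonoid.closure_induction (fun p hp hd => ?_) (fun hd => hH.not_isUnit (isUnit_of_dvd_one hd)) ?_ hs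
    · exact hass p hp (hH.associated_of_dvd (hP p hp).irreducible hd)
    · intro a b _ _ ha hb hd
      rcases hHp.dvd_mul.mp hd with h | h
      exacts [ha h, hb h]
  -- key: divisibility of images reflects
  have key : ∀ a : R, algebraMap R L H ∣ algebraMap R L a → H ∣ a := by
    intro a ⟨z, hz⟩
    obtain ⟨⟨t, u⟩, rfl⟩ := IsLocalization.mk'_surjective S z
    dsimp only at hz
    have : algebraMap R L (a * u) = algebraMap R L (H * t) := by
      rw [map_mul, map_mul, hz, mul_assoc, IsLocalization.mk'_spec]
    obtain ⟨c, hc⟩ := (IsLocalization.eq_iff_exists S L).mp this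
    have hd : H ∣ (c * u) * a := ⟨c * t, by ring_nf; ring_nf at hc; linear_combination hc⟩
    rcases hHp.dvd_mul.mp hd with h | h
    · exact absurd h (hnd _ (mul_mem c.2 u.2))
    · exact h
  -- image of H is prime
  have hPH : Prime (algebraMap R L H) := by
    refine ⟨?_, ?_, ?_⟩
    · simpa using (IsLocalization.to_map_ne_zero_of_mem_nonZeroDivisors L hle
        (mem_nonZeroDivisors_of_ne_zero hHp.ne_zero))
    · intro hu
      have : algebraMap R L H ∣ algebraMap R L 1 := by simpa using hu.dvd
      exact hH.not_isUnit (isUnit_of_dvd_one (key 1 this))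
    · intro x y hxy
      obtain ⟨⟨r, s⟩, rfl⟩ := IsLocalization.mk'_surjective S x
      obtain ⟨⟨r', s'⟩, rfl⟩ := IsLocalization.mk'_surjective S y
      dsimp only at hxy ⊢
      have hd : algebraMap R L H ∣ algebraMap R L (r * r') := by
        have := hxy.mul_right (algebraMap R L ((s * s' : S) : R))
        rwa [← IsLocalization.mk'_mul L r r' s s', IsLocalization.mk'_spec] at this
      have hru : ∀ (b : R) (v : S), algebraMap R L H ∣ algebraMap R L b →
          algebraMap R L H ∣ IsLocalization.mk' L b v := by
        intro b v hb
        obtain ⟨w, hw⟩ := hb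
        refine ⟨w * IsLocalization.mk' L 1 v, ?_⟩
        rw [← mul_assoc, ← hw, ← IsLocalization.mk'_eq_mul_mk'_one]
      rcases hHp.dvd_mul.mp (key _ hd) with h | h
      · exact Or.inl (hru r s (map_dvd _ h))
      · exact Or.inr (hru r' s' (map_dvd _ h))
  -- mk H ⟨A⟩ is associated to algebraMap H
  have hmk : Localization.mk H ⟨A, hA⟩ = algebraMap R L H * Localization.mk 1 ⟨A, hA⟩ := by
    rw [← Localization.mk_one_eq_algebraMap, Localization.mk_mul, mul_one, one_mul]
  have hunit : IsUnit (Localization.mk (1 : R) (⟨A, hA⟩ : S)) := by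
    refine IsUnit.of_mul_eq_one (algebraMap R L A) ?_
    rw [← Localization.mk_one_eq_algebraMap, Localization.mk_mul, one_mul, mul_one]
    exact Localization.mk_self (⟨A, hA⟩ : S)
  have hassoc : Associated (algebraMap R L H) (Localization.mk H ⟨A, hA⟩) := by
    obtain ⟨v, hv⟩ := hunit
    exact ⟨v, by rw [hv, ← hmk]⟩
  exact (hassoc.prime hPH).irreducible
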